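/- Let f be a density in 𝓢₀ and let F be the probability measure on [0,∞) with density f, i.e., F(A) = ∫_A f(y) dy. Then F belongs to 𝓢_loc: for every d > 0, F ∈ 𝓛_{Δ_d} and (F*F)((x, x+d])/F((x, x+d]) → 2 as x → ∞. -/

import Mathlib

open MeasureTheory Filter Set

noncomputable section

/-- A probability density supported on `[0, ∞)`. -/
def IsDensity (f : ℝ → ℝ) : Prop :=
  Measurable f ∧ (∀ x < (0:ℝ), f x = 0) ∧ (∀ x : ℝ, 0 ≤ f x) ∧
    ∫ y in Set.Ioi (0:ℝ), f y = 1

/-- The long-tailed density class `𝓛₀`. -/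
def LongTailedDensity (f : ℝ → ℝ) : Prop :=
  (∀ᶠ x in atTop, 0 < f x) ∧
  ∀ t : ℝ, Tendsto (fun x => f (x + t) / f x) atTop (nhds 1)

/-- The subexponential density class `𝓢₀`. -/
def SubexpDensity (f : ℝ → ℝ) : Prop :=
  LongTailedDensity f ∧
  Tendsto (fun x => (∫ y in (0:ℝ)..x, f (x - y) * f y) / f x) atTop (nhds 2)

/-- The local mass `F((x, x+d])` of a measure, as a real number. -/
def locMass (F : Measure ℝ) (d x : ℝ) : ℝ := (F (Set.Ioc x (x + d))).toReal

/-- `F ∈ 𝓛_{Δ_d}`. -/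
def MemLdelta (F : Measure ℝ) (d : ℝ) : Prop :=
  (∀ᶠ x in atTop, 0 < locMass F d x) ∧
  ∀ t > (0:ℝ), ∀ ε > (0:ℝ), ∀ᶠ x in atTop, ∀ s : ℝ, |s| ≤ t →
    |locMass F d (x + s) / locMass F d x - 1| ≤ ε

/-- Convolution of two measures on `ℝ`: the law of the sum of two
independent random variables with laws `F` and `G`. -/
def mconv (F G : Measure ℝ) : Measure ℝ :=
  Measure.map (fun p : ℝ × ℝ => p.1 + p.2) (F.prod G)

/-- `F ∈ 𝓢_{Δ_d}`. -/
def MemSdelta (F : Measure ℝ) (d : ℝ) : Prop :=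
  MemLdelta F d ∧
  Tendsto (fun x => locMass (mconv F F) d x / locMass F d x) atTop (nhds 2)

/-- The probability measure on `[0,∞)` with density `f`. -/
def densMeasure (f : ℝ → ℝ) : Measure ℝ :=
  volume.withDensity (fun y => ENNReal.ofReal (f y))
section Aux
variable {f : ℝ → ℝ}

lemma integrable_of_density (hint : ∫ y in Set.Ioi (0:ℝ), f y = 1) :
    IntegrableOn f (Set.Ioi (0:ℝ)) volume := by
  by_contra h
  rw [MeasureTheory.integral_undef h] at hint
  norm_num at hint

lemma lintegral_ofReal_f (h0 : ∀ x < (0:ℝ), f x = 0)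
    (hpos : ∀ x : ℝ, 0 ≤ f x) (hint : ∫ y in Set.Ioi (0:ℝ), f y = 1) :
    ∫⁻ y, ENNReal.ofReal (f y) = 1 := by
  have hI := integrable_of_density hint
  have h1 : ∫⁻ y in Set.Ioi (0:ℝ), ENNReal.ofReal (f y) = 1 := by
    rw [← ofReal_integral_eq_lintegral_ofReal hI (Filter.Eventually.of_forall fun y => hpos y),
      hint, ENNReal.ofReal_one]
  have h2 : ∫⁻ y in Set.Iic (0:ℝ), ENNReal.ofReal (f y) = 0 := by
    rw [setLIntegral_congr (Filter.EventuallyEq.symm Iio_ae_eq_Iic)]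
    rw [setLIntegral_congr_fun measurableSet_Iio
      (fun y (hy : y ∈ Set.Iio (0:ℝ)) => (by
        rw [h0 y hy, ENNReal.ofReal_zero] : ENNReal.ofReal (f y) = 0))]
    simp
  rw [← lintegral_add_compl (fun y => ENNReal.ofReal (f y)) (measurableSet_Iic (a := (0:ℝ))),
    compl_Iic, h2, h1, zero_add]

lemma densMeasure_prob (h0 : ∀ x < (0:ℝ), f x = 0)
    (hpos : ∀ x : ℝ, 0 ≤ f x) (hint : ∫ y in Set.Ioi (0:ℝ), f y = 1) :
    IsProbabilityMeasure (densMeasure f) := by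
  constructor
  rw [densMeasure, withDensity_apply _ MeasurableSet.univ, Measure.restrict_univ]
  exact lintegral_ofReal_f h0 hpos hint

/-- translation of lintegral over an interval -/
lemma lintegral_Ioc_shift (g : ℝ → ENNReal) (hg : Measurable g) (a b c : ℝ) :
    ∫⁻ z in Set.Ioc (c+a) (c+b), g z = ∫⁻ u in Set.Ioc a b, g (c + u) := by
  have h2 : (fun u : ℝ => c + u) ⁻¹' (Set.Ioc (c+a) (c+b)) = Set.Ioc a b := by
    ext u
    simp only [Set.mem_preimage, Set.mem_Ioc]
    constructor
    · rintro ⟨h3, h4⟩; constructor <;> linarith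
    · rintro ⟨h3, h4⟩; constructor <;> linarith
  have h1 : volume.restrict (Set.Ioc (c+a) (c+b))
      = Measure.map (fun u => c + u) (volume.restrict (Set.Ioc a b)) := by
    rw [← h2, ← Measure.restrict_map (measurable_const_add c) measurableSet_Ioc,
      map_add_left_eq_self volume c]
  rw [h1, lintegral_map hg (measurable_const_add c)]

/-- the local mass of densMeasure as lintegral and as real integral -/
lemma densMeasure_Ioc (hpos : ∀ x : ℝ, 0 ≤ f x)
    (hI : Integrable f volume) (a b : ℝ) :
    densMeasure f (Set.Ioc a b) = ENNReal.ofReal (∫ y in Set.Ioc a b, f y) := by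
  rw [densMeasure, withDensity_apply _ measurableSet_Ioc,
    ← ofReal_integral_eq_lintegral_ofReal (hI.integrableOn)
      (Filter.Eventually.of_forall fun y => hpos y)]

lemma integrable_f_global (h0 : ∀ x < (0:ℝ), f x = 0) (hm : Measurable f)
    (hpos : ∀ x : ℝ, 0 ≤ f x) (hint : ∫ y in Set.Ioi (0:ℝ), f y = 1) :
    Integrable f volume := by
  refine ⟨hm.aestronglyMeasurable, ?_⟩
  rw [hasFiniteIntegral_iff_norm]
  have : ∀ y : ℝ, ENNReal.ofReal ‖f y‖ = ENNReal.ofReal (f y) := fun y => by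
    rw [Real.norm_eq_abs, abs_of_nonneg (hpos y)]
  simp_rw [this, lintegral_ofReal_f h0 hpos hint]
  exact ENNReal.one_lt_top

end Aux
lemma steinhaus_pick {A : Set ℝ} (hA : MeasurableSet A) {T s : ℝ} (hT : 0 < T)
    (hsub : A ⊆ Set.Icc 0 (2*T)) (hvol : ENNReal.ofReal (7*T/4) ≤ volume A)
    (hs : |s| ≤ T) : ∃ t, t ∈ A ∧ t - s ∈ A := by
  by_contra hc
  push_neg at hc
  set B : Set ℝ := (fun t => t - s) ⁻¹' A with hB
  have hBmeas : MeasurableSet B := hA.preimage (measurable_sub_const s)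
  have hBvol : volume B = volume A := by
    have : B = (fun t => t + (-s)) ⁻¹' A := by
      ext t; simp [hB, sub_eq_add_neg]
    rw [this, measure_preimage_add_right]
  have hdisj : Disjoint A B := by
    rw [Set.disjoint_left]
    intro t htA htB
    exact hc t htA htB
  have hI : A ∪ B ⊆ Set.Icc (min 0 s) (2*T + max 0 s) := by
    rintro t (ht | ht)
    · obtain ⟨h1, h2⟩ := hsub ht
      exact ⟨le_trans (min_le_left _ _) h1, le_trans h2 (by nlinarith [le_max_left (0:ℝ) s])⟩
    · obtain ⟨h1, h2⟩ := hsub ht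
      have h1' : (0:ℝ) ≤ t - s := h1
      have h2' : t - s ≤ 2*T := h2
      constructor
      · have := min_le_right (0:ℝ) s; linarith
      · have := le_max_right (0:ℝ) s; linarith
  have habs : |s| = max 0 s - min 0 s := by
    rcases le_total 0 s with h | h
    · rw [abs_of_nonneg h, max_eq_right h, min_eq_left h]; ring
    · rw [abs_of_nonpos h, max_eq_left h, min_eq_right h]; ring
  have hUnion : volume (A ∪ B) ≤ ENNReal.ofReal (3*T) := by
    calc volume (A ∪ B) ≤ volume (Set.Icc (min 0 s) (2*T + max 0 s)) := measure_mono hI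
    _ = ENNReal.ofReal (2*T + max 0 s - min 0 s) := by rw [Real.volume_Icc]
    _ ≤ ENNReal.ofReal (3*T) := by
        apply ENNReal.ofReal_le_ofReal
        have : max 0 s - min 0 s ≤ T := by rw [← habs]; exact hs
        linarith
  have hsum : volume (A ∪ B) = volume A + volume B := measure_union hdisj hBmeas
  rw [hsum, hBvol] at hUnion
  have hlow : ENNReal.ofReal (7*T/2) ≤ volume A + volume A := by
    calc ENNReal.ofReal (7*T/2) = ENNReal.ofReal (7*T/4) + ENNReal.ofReal (7*T/4) := by
          rw [← ENNReal.ofReal_add (by linarith) (by linarith)]; ring_nf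
    _ ≤ volume A + volume A := add_le_add hvol hvol
  have : ENNReal.ofReal (7*T/2) ≤ ENNReal.ofReal (3*T) := le_trans hlow hUnion
  rw [ENNReal.ofReal_le_ofReal_iff (by linarith)] at this
  linarith
lemma uct {f : ℝ → ℝ} (hm : Measurable f) (hL : LongTailedDensity f)
    {T ε : ℝ} (hT : 0 < T) (hε : 0 < ε) :
    ∀ᶠ x in atTop, ∀ v : ℝ, |v| ≤ T →
      0 < f x ∧ 0 < f (x+v) ∧ (1-ε) * f x ≤ f (x+v) ∧ f (x+v) ≤ (1+ε) * f x := by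
  obtain ⟨X0, hX0⟩ := eventually_atTop.1 hL.1
  set h : ℝ → ℝ := fun x => Real.log (f x) with hdef
  have hmeas_h : Measurable h := Real.measurable_log.comp hm
  have hpt : ∀ t : ℝ, Tendsto (fun x => h (x+t) - h x) atTop (nhds 0) := by
    intro t
    have h1 := hL.2 t
    have h2 : Tendsto (fun x => Real.log (f (x+t) / f x)) atTop (nhds 0) := by
      have h3 := (Real.continuousAt_log (by norm_num : (1:ℝ) ≠ 0)).tendsto.comp h1
      simpa [Real.log_one, Function.comp_def] using h3
    refine h2.congr' ?_
    filter_upwards [eventually_ge_atTop X0, eventually_ge_atTop (X0 - t)] with x hx hx'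
    have hfx : 0 < f x := hX0 x hx
    have hfxt : 0 < f (x+t) := hX0 _ (by linarith)
    rw [Real.log_div hfxt.ne' hfx.ne']
  by_contra hc
  rw [Filter.not_eventually] at hc
  have hseq : ∀ n : ℕ, ∃ x, (n:ℝ) ≤ x ∧ ¬ (∀ v : ℝ, |v| ≤ T →
      0 < f x ∧ 0 < f (x+v) ∧ (1-ε) * f x ≤ f (x+v) ∧ f (x+v) ≤ (1+ε) * f x) := by
    intro n
    obtain ⟨b, hb, hPb⟩ := frequently_atTop.1 hc n
    exact ⟨b, hb, hPb⟩
  choose x hxge hnP using hseq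
  have hnP' : ∀ n : ℕ, ∃ v, |v| ≤ T ∧ (0 < f (x n) → 0 < f (x n + v) →
      (1-ε) * f (x n) ≤ f (x n + v) → (1+ε) * f (x n) < f (x n + v)) := by
    intro n
    have := hnP n
    push_neg at this
    exact this
  choose v hvT hviol using hnP'
  have htx : Tendsto x atTop atTop :=
    tendsto_atTop_mono hxge tendsto_natCast_atTop_atTop
  have hty : Tendsto (fun n => x n + v n) atTop atTop := by
    refine tendsto_atTop_mono (fun n => ?_) (tendsto_atTop_add_const_right atTop (-T) htx)
    have := abs_le.1 (hvT n); linarith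
  set Aseq : ℕ → ℝ → ℝ := fun n t => h (x n + t) - h (x n) with hAseq
  set Bseq : ℕ → ℝ → ℝ := fun n t => h (x n + v n + t) - h (x n + v n) with hBseq
  have hAmeas : ∀ n, StronglyMeasurable (Aseq n) := fun n =>
    (((hmeas_h.comp (measurable_const_add (x n))).sub measurable_const)).stronglyMeasurable
  have hBmeas : ∀ n, StronglyMeasurable (Bseq n) := fun n =>
    (((hmeas_h.comp (measurable_const_add (x n + v n))).sub measurable_const)).stronglyMeasurable
  have hAconv : ∀ t : ℝ, Tendsto (fun n => Aseq n t) atTop (nhds 0) := fun t =>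
    (hpt t).comp htx
  have hBconv : ∀ t : ℝ, Tendsto (fun n => Bseq n t) atTop (nhds 0) := fun t =>
    (hpt t).comp hty
  have hsfin : volume (Set.Icc (0:ℝ) (2*T)) ≠ ⊤ := by
    rw [Real.volume_Icc]; exact ENNReal.ofReal_ne_top
  have hT8 : (0:ℝ) < T/8 := by linarith
  obtain ⟨t1, ht1sub, ht1m, ht1vol, ht1unif⟩ :=
    MeasureTheory.tendstoUniformlyOn_of_ae_tendsto hAmeas stronglyMeasurable_const
      measurableSet_Icc hsfin (ae_of_all _ fun t _ => hAconv t) hT8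
  obtain ⟨t2, ht2sub, ht2m, ht2vol, ht2unif⟩ :=
    MeasureTheory.tendstoUniformlyOn_of_ae_tendsto hBmeas stronglyMeasurable_const
      measurableSet_Icc hsfin (ae_of_all _ fun t _ => hBconv t) hT8
  set A : Set ℝ := Set.Icc (0:ℝ) (2*T) \ (t1 ∪ t2) with hAdef
  have hAm : MeasurableSet A := measurableSet_Icc.diff (ht1m.union ht2m)
  have hAsub : A ⊆ Set.Icc 0 (2*T) := Set.diff_subset
  have hAvol : ENNReal.ofReal (7*T/4) ≤ volume A := by
    have hcover : volume (Set.Icc (0:ℝ) (2*T)) ≤ volume A + volume (t1 ∪ t2) := by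
      rw [← measure_diff_add_inter _ (ht1m.union ht2m)]
      exact add_le_add le_rfl (measure_mono Set.inter_subset_right)
    have he : volume (t1 ∪ t2) ≤ ENNReal.ofReal (T/4) := by
      calc volume (t1 ∪ t2) ≤ volume t1 + volume t2 := measure_union_le _ _
      _ ≤ ENNReal.ofReal (T/8) + ENNReal.ofReal (T/8) := add_le_add ht1vol ht2vol
      _ = ENNReal.ofReal (T/4) := by
          rw [← ENNReal.ofReal_add (by linarith) (by linarith)]; ring_nf
    rw [Real.volume_Icc] at hcover
    have h24 : (2*T - 0 : ℝ) = 7*T/4 + T/4 := by ring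
    rw [h24, ENNReal.ofReal_add (by linarith) (by linarith)] at hcover
    have := hcover.trans (add_le_add le_rfl he)
    exact ENNReal.le_of_add_le_add_right ENNReal.ofReal_ne_top this
  set η : ℝ := Real.log (1+ε) with hηdef
  have hη : 0 < η := Real.log_pos (by linarith)
  obtain ⟨N1, hN1⟩ := eventually_atTop.1 ((Metric.tendstoUniformlyOn_iff.1 ht1unif) (η/2)
    (by linarith))
  obtain ⟨N2, hN2⟩ := eventually_atTop.1 ((Metric.tendstoUniformlyOn_iff.1 ht2unif) (η/2)
    (by linarith))
  set n0 : ℕ := (max N1 N2) ⊔ ⌈X0 + T⌉₊ with hn0def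
  have hxn0 : X0 + T ≤ x n0 := by
    have h1 : ((⌈X0 + T⌉₊ : ℕ) : ℝ) ≤ (n0 : ℝ) := Nat.cast_le.2 (le_max_right _ _)
    have h2 := Nat.le_ceil (X0 + T)
    have h3 := hxge n0
    linarith
  obtain ⟨t, htA, htA'⟩ := steinhaus_pick hAm hT hAsub hAvol (hvT n0)
  have hA1 : dist (0:ℝ) (Aseq n0 t) < η/2 := by
    refine hN1 n0 (le_trans (le_max_left _ _) (le_max_left _ _)) t ?_
    exact Set.diff_subset_diff_right Set.subset_union_left htA
  have hB1 : dist (0:ℝ) (Bseq n0 (t - v n0)) < η/2 := by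
    refine hN2 n0 (le_trans (le_max_right _ _) (le_max_left _ _)) (t - v n0) ?_
    exact Set.diff_subset_diff_right Set.subset_union_right htA'
  simp only [Real.dist_eq, zero_sub, abs_neg] at hA1 hB1
  have halg : h (x n0 + v n0) - h (x n0) = Aseq n0 t - Bseq n0 (t - v n0) := by
    have hxx : x n0 + v n0 + (t - v n0) = x n0 + t := by ring
    simp only [hAseq, hBseq, hxx]
    ring
  have hΔ : |h (x n0 + v n0) - h (x n0)| < η := by
    rw [halg]
    calc |Aseq n0 t - Bseq n0 (t - v n0)| ≤ |Aseq n0 t| + |Bseq n0 (t - v n0)| := abs_sub _ _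
    _ < η/2 + η/2 := by gcongr
    _ = η := by ring
  have hfx : 0 < f (x n0) := hX0 _ (by linarith)
  have hfxv : 0 < f (x n0 + v n0) := by
    refine hX0 _ ?_
    have := abs_le.1 (hvT n0); linarith
  obtain ⟨hΔ1, hΔ2⟩ := abs_lt.1 hΔ
  have hexp : f (x n0 + v n0) = f (x n0) * Real.exp (h (x n0 + v n0) - h (x n0)) := by
    rw [Real.exp_sub]
    simp only [hdef]
    rw [Real.exp_log hfxv, Real.exp_log hfx]
    field_simp
  have hexpη : Real.exp η = 1 + ε := Real.exp_log (by linarith)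
  have hupper : f (x n0 + v n0) ≤ (1+ε) * f (x n0) := by
    rw [hexp, mul_comm]
    apply mul_le_mul_of_nonneg_right _ hfx.le
    rw [← hexpη]
    exact (Real.exp_le_exp.2 hΔ2.le)
  have hlower : (1-ε) * f (x n0) ≤ f (x n0 + v n0) := by
    rw [hexp]
    have h1 : Real.exp (-η) ≤ Real.exp (h (x n0 + v n0) - h (x n0)) :=
      Real.exp_le_exp.2 (by linarith)
    have h2 : Real.exp (-η) = 1/(1+ε) := by
      rw [Real.exp_neg, hexpη]; field_simp
    have h3 : (1-ε) ≤ 1/(1+ε) := by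
      rw [le_div_iff₀ (by linarith : (0:ℝ) < 1+ε)]
      nlinarith
    calc (1-ε) * f (x n0) ≤ (1/(1+ε)) * f (x n0) :=
          mul_le_mul_of_nonneg_right h3 hfx.le
    _ = f (x n0) * Real.exp (-η) := by rw [h2]; ring
    _ ≤ f (x n0) * Real.exp (h (x n0 + v n0) - h (x n0)) :=
          mul_le_mul_of_nonneg_left h1 hfx.le
  exact absurd hupper (not_le.2 (hviol n0 hfx hfxv hlower))
section PartB
variable {f : ℝ → ℝ}

lemma mconv_Ioc (hm : Measurable f) (h0 : ∀ x < (0:ℝ), f x = 0)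
    (hpos : ∀ x : ℝ, 0 ≤ f x) (hint : ∫ y in Set.Ioi (0:ℝ), f y = 1) (d x : ℝ) :
    mconv (densMeasure f) (densMeasure f) (Set.Ioc x (x+d)) =
      ∫⁻ u in Set.Ioc (0:ℝ) d, ∫⁻ y, ENNReal.ofReal (f y * f ((x+u) - y)) ∂volume ∂volume := by
  haveI := densMeasure_prob h0 hpos hint
  have hmd : Measurable fun y : ℝ => ENNReal.ofReal (f y) := ENNReal.measurable_ofReal.comp hm
  rw [mconv, Measure.map_apply measurable_add measurableSet_Ioc,
    Measure.prod_apply (measurableSet_Ioc.preimage measurable_add)]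
  have hset : ∀ y : ℝ, (Prod.mk y ⁻¹' ((fun p : ℝ × ℝ => p.1 + p.2) ⁻¹' Set.Ioc x (x+d)))
      = Set.Ioc (x - y) ((x - y) + d) := by
    intro y
    ext z
    simp only [Set.mem_preimage, Set.mem_Ioc]
    constructor
    · rintro ⟨h1, h2⟩; constructor <;> linarith
    · rintro ⟨h1, h2⟩; constructor <;> linarith
  have hinner : ∀ y : ℝ, densMeasure f (Set.Ioc (x - y) ((x - y) + d))
      = ∫⁻ u in Set.Ioc (0:ℝ) d, ENNReal.ofReal (f ((x - y) + u)) := by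
    intro y
    rw [densMeasure, withDensity_apply _ measurableSet_Ioc]
    have := lintegral_Ioc_shift (fun z => ENNReal.ofReal (f z)) hmd 0 d (x - y)
    rw [add_zero] at this
    exact this
  have hstep1 : ∫⁻ y, densMeasure f
        (Prod.mk y ⁻¹' ((fun p : ℝ × ℝ => p.1 + p.2) ⁻¹' Set.Ioc x (x+d))) ∂(densMeasure f)
      = ∫⁻ y, (∫⁻ u in Set.Ioc (0:ℝ) d, ENNReal.ofReal (f ((x - y) + u))) ∂(densMeasure f) := by
    refine lintegral_congr fun y => ?_
    rw [hset y, hinner y]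
  rw [hstep1]
  have hunc : Measurable (Function.uncurry fun y u : ℝ => ENNReal.ofReal (f ((x - y) + u))) := by
    apply ENNReal.measurable_ofReal.comp
    exact hm.comp (((measurable_const.sub measurable_fst).add measurable_snd))
  have hinmeas : Measurable fun y : ℝ =>
      ∫⁻ u in Set.Ioc (0:ℝ) d, ENNReal.ofReal (f ((x - y) + u)) :=
    Measurable.lintegral_prod_right hunc
  rw [densMeasure, lintegral_withDensity_eq_lintegral_mul volume hmd hinmeas]
  have hstep2 : ∫⁻ y, ((fun y => ENNReal.ofReal (f y)) * fun y =>
        ∫⁻ u in Set.Ioc (0:ℝ) d, ENNReal.ofReal (f ((x - y) + u))) y ∂volume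
      = ∫⁻ y, ∫⁻ u in Set.Ioc (0:ℝ) d,
          ENNReal.ofReal (f y) * ENNReal.ofReal (f ((x - y) + u)) ∂volume ∂volume := by
    refine lintegral_congr fun y => ?_
    simp only [Pi.mul_apply]
    exact (lintegral_const_mul _ (ENNReal.measurable_ofReal.comp
      (hm.comp (measurable_const_add (x - y))))).symm
  rw [hstep2]
  rw [lintegral_lintegral_swap]
  · refine lintegral_congr fun u => lintegral_congr fun y => ?_
    rw [← ENNReal.ofReal_mul (hpos y)]
    congr 2
    ring
  · apply Measurable.aemeasurable
    apply Measurable.mul (f := fun p : ℝ × ℝ => ENNReal.ofReal (f p.1))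
      (g := fun p : ℝ × ℝ => ENNReal.ofReal (f (x - p.1 + p.2)))
    · exact hmd.comp measurable_fst
    · exact ENNReal.measurable_ofReal.comp
        (hm.comp ((measurable_const.sub measurable_fst).add measurable_snd))

lemma Cw_eq (h0 : ∀ x < (0:ℝ), f x = 0) (hpos : ∀ x : ℝ, 0 ≤ f x) {w : ℝ} (hw : 0 < w)
    (hii : IntervalIntegrable (fun y => f (w - y) * f y) volume 0 w) :
    ∫⁻ y, ENNReal.ofReal (f y * f (w - y)) ∂volume
      = ENNReal.ofReal (∫ y in (0:ℝ)..w, f (w - y) * f y) := by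
  have hind : (fun y => ENNReal.ofReal (f y * f (w - y)))
      = (Set.Icc 0 w).indicator (fun y => ENNReal.ofReal (f y * f (w - y))) := by
    ext y
    by_cases hy : y ∈ Set.Icc 0 w
    · rw [Set.indicator_of_mem hy]
    · rw [Set.indicator_of_notMem hy]
      rw [Set.mem_Icc, not_and_or] at hy
      rcases hy with hy | hy
      · rw [h0 y (by linarith [not_le.1 hy]), zero_mul, ENNReal.ofReal_zero]
      · rw [h0 (w - y) (by linarith [not_le.1 hy]), mul_zero, ENNReal.ofReal_zero]
  rw [hind, lintegral_indicator measurableSet_Icc,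
    setLIntegral_congr (Filter.EventuallyEq.symm (MeasureTheory.Ioc_ae_eq_Icc))]
  have hInt : IntegrableOn (fun y => f y * f (w - y)) (Set.Ioc 0 w) volume := by
    have h1 := (intervalIntegrable_iff_integrableOn_Ioc_of_le hw.le).1 hii
    have h2 : (fun y => f (w - y) * f y) = (fun y => f y * f (w - y)) := by
      ext y; ring
    rwa [h2] at h1
  rw [← ofReal_integral_eq_lintegral_ofReal hInt
    (Filter.Eventually.of_forall fun y => mul_nonneg (hpos y) (hpos _))]
  congr 1
  rw [intervalIntegral.integral_of_le hw.le]
  refine setIntegral_congr_fun measurableSet_Ioc fun y _ => ?_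
  ring

end PartB
section LocMass
variable {f : ℝ → ℝ}

lemma locMass_eq (hpos : ∀ x : ℝ, 0 ≤ f x) (hI : Integrable f volume) (d a : ℝ) :
    locMass (densMeasure f) d a = ∫ y in Set.Ioc a (a+d), f y := by
  rw [locMass, densMeasure_Ioc hpos hI, ENNReal.toReal_ofReal
    (setIntegral_nonneg measurableSet_Ioc fun y _ => hpos y)]

lemma integral_Ioc_bounds (hI : Integrable f volume) {d : ℝ} (hd : 0 ≤ d) {c1 c2 a : ℝ}
    (hb : ∀ y ∈ Set.Ioc a (a+d), c1 ≤ f y ∧ f y ≤ c2) :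
    c1 * d ≤ ∫ y in Set.Ioc a (a+d), f y ∧ (∫ y in Set.Ioc a (a+d), f y) ≤ c2 * d := by
  have hvol : volume (Set.Ioc a (a+d)) = ENNReal.ofReal d := by
    rw [Real.volume_Ioc]; congr 1; ring
  have hμ : volume.real (Set.Ioc a (a+d)) = d := by
    rw [measureReal_def, hvol, ENNReal.toReal_ofReal hd]
  have hconst : ∀ c : ℝ, IntegrableOn (fun _ => c) (Set.Ioc a (a+d)) volume := by
    intro c
    exact integrableOn_const (by rw [hvol]; exact ENNReal.ofReal_ne_top)
  constructor
  · have h1 := setIntegral_mono_on (hconst c1) hI.integrableOn measurableSet_Ioc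
      (fun y hy => (hb y hy).1)
    rw [setIntegral_const, hμ, smul_eq_mul] at h1
    linarith [h1]
  · have h1 := setIntegral_mono_on hI.integrableOn (hconst c2) measurableSet_Ioc
      (fun y hy => (hb y hy).2)
    rwa [setIntegral_const, hμ, smul_eq_mul, mul_comm d c2] at h1

end LocMass
theorem subexp_density_implies_S_loc (f : ℝ → ℝ)
    (hf : IsDensity f) (hS : SubexpDensity f) :
    ∀ d > (0:ℝ), MemSdelta (densMeasure f) d := by
  obtain ⟨hm, h0, hpos, hint⟩ := hf
  obtain ⟨hL, hconv⟩ := hS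
  have hI : Integrable f volume := integrable_f_global h0 hm hpos hint
  haveI hprob : IsProbabilityMeasure (densMeasure f) := densMeasure_prob h0 hpos hint
  have hmd : Measurable fun y : ℝ => ENNReal.ofReal (f y) := ENNReal.measurable_ofReal.comp hm
  intro d hd
  -- eventual positivity of locMass
  have hGpos : ∀ᶠ x in atTop, 0 < locMass (densMeasure f) d x := by
    filter_upwards [uct hm hL hd one_half_pos] with x hx
    rw [locMass_eq hpos hI]
    have hb : ∀ y ∈ Set.Ioc x (x+d), (1 - 1/2) * f x ≤ f y ∧ f y ≤ (1 + 1/2) * f x := by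
      intro y hy
      obtain ⟨h1, h2⟩ := hy
      have hv := hx (y - x) (by rw [abs_le]; constructor <;> linarith)
      rw [show x + (y - x) = y by ring] at hv
      exact ⟨hv.2.2.1, hv.2.2.2⟩
    have hfx : 0 < f x := (hx 0 (by rw [abs_zero]; exact hd.le)).1
    have h2 := (integral_Ioc_bounds hI hd.le hb).1
    nlinarith
  refine ⟨⟨hGpos, ?_⟩, ?_⟩
  · -- uniform long-tailedness of locMass
    intro t ht ε hε
    set δ := min (ε/4) (1/2) with hδdef
    have hδ1 : δ ≤ ε/4 := min_le_left _ _
    have hδ2 : δ ≤ 1/2 := min_le_right _ _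
    have hδpos : 0 < δ := lt_min (by linarith) one_half_pos
    have hTpos : (0:ℝ) < t + d := by linarith
    filter_upwards [uct hm hL hTpos hδpos] with x hx
    intro s hs
    have hfx : 0 < f x := (hx 0 (by rw [abs_zero]; linarith)).1
    have key : ∀ s' : ℝ, |s'| ≤ t →
        (1-δ) * f x * d ≤ locMass (densMeasure f) d (x + s') ∧
        locMass (densMeasure f) d (x + s') ≤ (1+δ) * f x * d := by
      intro s' hs'
      rw [locMass_eq hpos hI]
      have habs := abs_le.1 hs'
      have hb : ∀ y ∈ Set.Ioc (x+s') (x+s'+d),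
          (1-δ) * f x ≤ f y ∧ f y ≤ (1+δ) * f x := by
        intro y hy
        obtain ⟨h1, h2⟩ := hy
        have hv := hx (y - x) (by rw [abs_le]; constructor <;> linarith)
        rw [show x + (y - x) = y by ring] at hv
        exact ⟨hv.2.2.1, hv.2.2.2⟩
      have h3 := integral_Ioc_bounds hI hd.le hb
      constructor
      · have := h3.1; linarith [this]
      · have := h3.2; linarith [this]
    have hGx := key 0 (by rw [abs_zero]; exact ht.le)
    rw [add_zero] at hGx
    have hGs := key s hs
    have hGxpos : 0 < locMass (densMeasure f) d x := by nlinarith [hGx.1]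
    have hP : (0:ℝ) ≤ f x * d := mul_nonneg hfx.le hd.le
    have hkey : 2*δ + ε*δ ≤ ε := by nlinarith
    have h5 : (2*δ + ε*δ) * (f x * d) ≤ ε * (f x * d) := mul_le_mul_of_nonneg_right hkey hP
    have h6 : ε * ((1-δ) * f x * d) ≤ ε * locMass (densMeasure f) d x :=
      mul_le_mul_of_nonneg_left hGx.1 hε.le
    rw [abs_le]
    constructor
    · have h7 : (1-ε) * locMass (densMeasure f) d x ≤ locMass (densMeasure f) d (x + s) := by
        nlinarith [hGs.1, hGx.2]
      have h8 := (le_div_iff₀ hGxpos).2 h7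
      linarith
    · have h7 : locMass (densMeasure f) d (x + s) ≤ (1+ε) * locMass (densMeasure f) d x := by
        nlinarith [hGs.2, hGx.1]
      have h8 := (div_le_iff₀ hGxpos).2 h7
      linarith
  · -- convolution ratio tends to 2
    rw [Metric.tendsto_atTop]
    intro ε hε
    set δ := min (ε/2) (1/2) with hδdef
    have hδ1 : δ ≤ ε/2 := min_le_left _ _
    have hδ2 : δ ≤ 1/2 := min_le_right _ _
    have hδpos : 0 < δ := lt_min (by linarith) one_half_pos
    have hEv : ∀ᶠ w in atTop, 0 < w ∧ 0 < f w ∧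
        ∫⁻ y, ENNReal.ofReal (f y * f (w - y)) ∂volume
          = ENNReal.ofReal (∫ y in (0:ℝ)..w, f (w - y) * f y) ∧
        (2-δ) * f w ≤ (∫ y in (0:ℝ)..w, f (w - y) * f y) ∧
        (∫ y in (0:ℝ)..w, f (w - y) * f y) ≤ (2+δ) * f w := by
      filter_upwards [eventually_gt_atTop (0:ℝ), hL.1,
        Metric.tendsto_nhds.1 hconv δ hδpos] with w hw hfw hdist
      have habs := abs_lt.1 (by rwa [Real.dist_eq] at hdist)
      have hlow : (2-δ) * f w ≤ ∫ y in (0:ℝ)..w, f (w - y) * f y := by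
        have h1 : 2 - δ ≤ (∫ y in (0:ℝ)..w, f (w - y) * f y) / f w := by linarith
        rw [le_div_iff₀ hfw] at h1
        linarith
      have hup : (∫ y in (0:ℝ)..w, f (w - y) * f y) ≤ (2+δ) * f w := by
        have h1 : (∫ y in (0:ℝ)..w, f (w - y) * f y) / f w ≤ 2 + δ := by linarith
        rw [div_le_iff₀ hfw] at h1
        linarith
      have hii : IntervalIntegrable (fun y => f (w - y) * f y) volume 0 w := by
        by_contra hni
        rw [intervalIntegral.integral_undef hni] at hlow
        nlinarith
      exact ⟨hw, hfw, Cw_eq h0 hpos hw hii, hlow, hup⟩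
    obtain ⟨W, hW⟩ := eventually_atTop.1 hEv
    obtain ⟨X1, hX1⟩ := eventually_atTop.1 hGpos
    refine ⟨max W X1, fun x hx => ?_⟩
    have hxW : W ≤ x := le_trans (le_max_left _ _) hx
    have hxX1 : X1 ≤ x := le_trans (le_max_right _ _) hx
    have hGx : 0 < locMass (densMeasure f) d x := hX1 x hxX1
    have hCmeas : Measurable fun w : ℝ => ∫⁻ y, ENNReal.ofReal (f y * f (w - y)) ∂volume := by
      apply Measurable.lintegral_prod_right
      exact ENNReal.measurable_ofReal.comp
        ((hm.comp measurable_snd).mul (hm.comp (measurable_fst.sub measurable_snd)))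
    have hGl_eq : densMeasure f (Set.Ioc x (x+d))
        = ∫⁻ u in Set.Ioc (0:ℝ) d, ENNReal.ofReal (f (x+u)) := by
      rw [densMeasure, withDensity_apply _ measurableSet_Ioc]
      have h1 := lintegral_Ioc_shift (fun z => ENNReal.ofReal (f z)) hmd 0 d x
      rw [add_zero] at h1
      exact h1
    have hCmeas' : Measurable fun u : ℝ =>
        ∫⁻ y, ENNReal.ofReal (f y * f ((x+u) - y)) ∂volume :=
      hCmeas.comp (measurable_const_add x)
    have hmx : Measurable fun u : ℝ => ENNReal.ofReal (f (x+u)) :=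
      hmd.comp (measurable_const_add x)
    have hN' : mconv (densMeasure f) (densMeasure f) (Set.Ioc x (x+d))
        = ∫⁻ u in Set.Ioc (0:ℝ) d, ∫⁻ y, ENNReal.ofReal (f y * f ((x+u) - y)) ∂volume :=
      mconv_Ioc hm h0 hpos hint d x
    have hub : (∫⁻ u in Set.Ioc (0:ℝ) d, ∫⁻ y, ENNReal.ofReal (f y * f ((x+u) - y)) ∂volume)
        ≤ ENNReal.ofReal (2+δ) * densMeasure f (Set.Ioc x (x+d)) := by
      have h1 : (∫⁻ u in Set.Ioc (0:ℝ) d, ∫⁻ y, ENNReal.ofReal (f y * f ((x+u) - y)) ∂volume)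
          ≤ ∫⁻ u in Set.Ioc (0:ℝ) d, ENNReal.ofReal ((2+δ) * f (x+u)) := by
        apply setLIntegral_mono
        · exact ENNReal.measurable_ofReal.comp
            (measurable_const.mul (hm.comp (measurable_const_add x)))
        · intro u hu
          obtain ⟨hW1, hW2, hW3, hW4, hW5⟩ := hW (x+u) (by linarith [hu.1])
          rw [hW3]
          exact ENNReal.ofReal_le_ofReal hW5
      refine h1.trans (le_of_eq ?_)
      simp_rw [ENNReal.ofReal_mul (by linarith : (0:ℝ) ≤ 2+δ)]
      rw [lintegral_const_mul _ hmx, hGl_eq]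
    have hlb : ENNReal.ofReal (2-δ) * densMeasure f (Set.Ioc x (x+d))
        ≤ ∫⁻ u in Set.Ioc (0:ℝ) d, ∫⁻ y, ENNReal.ofReal (f y * f ((x+u) - y)) ∂volume := by
      have h1 : (∫⁻ u in Set.Ioc (0:ℝ) d, ENNReal.ofReal ((2-δ) * f (x+u)))
          ≤ ∫⁻ u in Set.Ioc (0:ℝ) d, ∫⁻ y, ENNReal.ofReal (f y * f ((x+u) - y)) ∂volume := by
        apply setLIntegral_mono hCmeas'
        intro u hu
        obtain ⟨hW1, hW2, hW3, hW4, hW5⟩ := hW (x+u) (by linarith [hu.1])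
        rw [hW3]
        exact ENNReal.ofReal_le_ofReal hW4
      refine le_trans (le_of_eq ?_) h1
      simp_rw [ENNReal.ofReal_mul (by linarith : (0:ℝ) ≤ 2-δ)]
      rw [lintegral_const_mul _ hmx, hGl_eq]
    have hGlfin : densMeasure f (Set.Ioc x (x+d)) ≠ ⊤ := measure_ne_top _ _
    have hrhsfin : ENNReal.ofReal (2+δ) * densMeasure f (Set.Ioc x (x+d)) ≠ ⊤ :=
      ENNReal.mul_ne_top ENNReal.ofReal_ne_top hGlfin
    have hNfin : mconv (densMeasure f) (densMeasure f) (Set.Ioc x (x+d)) ≠ ⊤ := by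
      rw [hN']
      exact ne_top_of_le_ne_top hrhsfin hub
    have hub' : locMass (mconv (densMeasure f) (densMeasure f)) d x
        ≤ (2+δ) * locMass (densMeasure f) d x := by
      rw [locMass, locMass, hN']
      have h1 := ENNReal.toReal_mono hrhsfin hub
      rwa [ENNReal.toReal_mul, ENNReal.toReal_ofReal (by linarith : (0:ℝ) ≤ 2+δ)] at h1
    have hlb' : (2-δ) * locMass (densMeasure f) d x
        ≤ locMass (mconv (densMeasure f) (densMeasure f)) d x := by
      rw [locMass, locMass, hN']
      have h1 := ENNReal.toReal_mono (hN' ▸ hNfin) hlb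
      rwa [ENNReal.toReal_mul, ENNReal.toReal_ofReal (by linarith : (0:ℝ) ≤ 2-δ)] at h1
    rw [Real.dist_eq, abs_lt]
    constructor
    · rw [neg_lt, neg_sub, sub_lt_iff_lt_add, ← sub_lt_iff_lt_add', lt_div_iff₀ hGx]
      nlinarith
    · rw [sub_lt_iff_lt_add, div_lt_iff₀ hGx]
      nlinarith
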